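/- Every cap in (Z/2Z)^n with at most 5 elements is affinely independent. -/
import Mathlib


def IsCap {n : ℕ} (S : Set (Fin n → ZMod 2)) : Prop :=
  ∀ a ∈ S, ∀ b ∈ S, ∀ c ∈ S, ∀ d ∈ S,
    a ≠ b → a ≠ c → a ≠ d → b ≠ c → b ≠ d → c ≠ d → a + b + c + d ≠ 0

private lemma zmod2_add_eq_zero : ∀ a b : ZMod 2, a + b = 0 → a = b := by decide

private lemma pi_zmod2_eq_of_add_eq_zero {n : ℕ} {a b : Fin n → ZMod 2} (h : a + b = 0) :
    a = b :=
  funext fun x => zmod2_add_eq_zero _ _ (congrFun h x)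

/-- Every cap in `(ZMod 2)^n` with at most 5 elements is affinely independent. -/
theorem cap_card_le_five_affineIndependent {n : ℕ} (C : Finset (Fin n → ZMod 2))
    (hC : IsCap (C : Set (Fin n → ZMod 2))) (hcard : C.card ≤ 5) :
    AffineIndependent (ZMod 2)
      (fun x : ↥(C : Set (Fin n → ZMod 2)) => (x : Fin n → ZMod 2)) := by
  rw [affineIndependent_iff]
  intro s w hw hws i hi
  by_contra hne
  have hone : ∀ x : ZMod 2, x ≠ 0 → x = 1 := by decide
  have hinj : Function.Injective (Subtype.val : ↥(C : Set (Fin n → ZMod 2)) → _) :=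
    Subtype.val_injective
  let t : Finset ↥(C : Set (Fin n → ZMod 2)) := s.filter (fun j => w j = 1)
  let u : Finset (Fin n → ZMod 2) := t.image Subtype.val
  have hfilter : ∀ (f : ↥(C : Set (Fin n → ZMod 2)) → Fin n → ZMod 2),
      True := fun _ => trivial
  have hsum : ∑ x ∈ u, x = 0 := by
    rw [Finset.sum_image (fun a _ b _ h => hinj h)]
    have h1 : ∑ j ∈ t, (j : Fin n → ZMod 2) = ∑ j ∈ t, w j • (j : Fin n → ZMod 2) :=
      Finset.sum_congr rfl fun j hj => by
        rw [(Finset.mem_filter.mp hj).2, one_smul]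
    rw [h1]
    rw [show (t = s.filter (fun j => w j = 1)) from rfl,
      Finset.sum_filter_of_ne (fun x _ hx => hone _ (fun h0 => hx (by rw [h0, zero_smul])))]
    exact hws
  have hcardt : ((t.card : ZMod 2)) = 0 := by
    have h2 : ∑ j ∈ t, w j = (t.card : ZMod 2) := by
      rw [Finset.sum_congr rfl (fun j hj => (Finset.mem_filter.mp hj).2)]
      simp [t]
    have h3 : ∑ j ∈ t, w j = ∑ j ∈ s, w j :=
      Finset.sum_filter_of_ne (fun x _ hx => hone _ hx)
    rw [← h2, h3]
    exact hw
  have heven : 2 ∣ u.card := by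
    rw [Finset.card_image_of_injective _ hinj]
    exact (ZMod.natCast_eq_zero_iff _ _).mp hcardt
  have husub : ∀ x ∈ u, x ∈ (C : Set (Fin n → ZMod 2)) := by
    intro x hx
    obtain ⟨j, _, rfl⟩ := Finset.mem_image.mp hx
    exact j.2
  have hiu : (i : Fin n → ZMod 2) ∈ u :=
    Finset.mem_image_of_mem _ (Finset.mem_filter.mpr ⟨hi, hone _ hne⟩)
  have hucard : u.card ≤ 5 :=
    le_trans (Finset.card_le_card fun x hx => husub x hx) hcard
  have hpos : 0 < u.card := Finset.card_pos.mpr ⟨_, hiu⟩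
  interval_cases h : u.card
  · exact absurd heven (by omega)
  · -- card 2
    obtain ⟨a, b, hab, hue⟩ := Finset.card_eq_two.mp h
    rw [hue, Finset.sum_pair hab] at hsum
    exact hab (pi_zmod2_eq_of_add_eq_zero hsum)
  · exact absurd heven (by omega)
  · -- card 4
    obtain ⟨a, ha⟩ := Finset.card_pos.mp (by omega : 0 < u.card)
    have h3 : (u.erase a).card = 3 := by rw [Finset.card_erase_of_mem ha, h]
    obtain ⟨b, c, d, hbc, hbd, hcd, he⟩ := Finset.card_eq_three.mp h3
    have hbe : b ∈ u.erase a := by rw [he]; simp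
    have hce : c ∈ u.erase a := by rw [he]; simp
    have hde : d ∈ u.erase a := by rw [he]; simp
    have hab : a ≠ b := fun hh => Finset.notMem_erase a u (hh ▸ hbe)
    have hac : a ≠ c := fun hh => Finset.notMem_erase a u (hh ▸ hce)
    have had : a ≠ d := fun hh => Finset.notMem_erase a u (hh ▸ hde)
    have hsum4 : a + b + c + d = 0 := by
      have h5 := Finset.add_sum_erase u id ha
      rw [he, Finset.sum_insert (by simp [hbc, hbd]), Finset.sum_pair hcd] at h5
      simp only [id] at h5
      rw [← hsum, ← h5]; ring
    exact hC a (husub a ha) b (husub b (Finset.mem_of_mem_erase hbe))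
      c (husub c (Finset.mem_of_mem_erase hce)) d (husub d (Finset.mem_of_mem_erase hde))
      hab hac had hbc hbd hcd hsum4
  · exact absurd heven (by omega)
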